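/- Let n ≥ 3 and in ℂ[x_1,…,x_n] set p = x_1 + x_2 + ⋯ + x_n − x_1x_2⋯x_n. Then the set of points a ∈ ℂ^n at which all partial derivatives ∂p/∂x_i vanish is exactly the set of constant tuples (ζ, ζ, …, ζ) with ζ^{n−1} = 1; in particular, grad(p) has exactly n−1 common zeros. -/

import Mathlib

open MvPolynomial

lemma pderiv_prod_X_of_not_mem {n : ℕ} (i : Fin n) (s : Finset (Fin n)) (hi : i ∉ s) :
    pderiv i (∏ j ∈ s, X j : MvPolynomial (Fin n) ℂ) = 0 := by
  induction s using Finset.induction with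
  | empty => simp
  | @insert j s' h ih =>
    rw [Finset.prod_insert h, pderiv_mul,
      pderiv_X_of_ne (by rintro rfl; exact hi (Finset.mem_insert_self j s')),
      ih (fun hmem => hi (Finset.mem_insert_of_mem hmem))]
    ring

/-- The gradient computation for `p = x₁ + ⋯ + xₙ - x₁⋯xₙ` in the proof of
Proposition 1.4: the common zeros of `grad p` are exactly the constant tuples
`(ζ,…,ζ)` with `ζ^(n-1) = 1`; in particular there are exactly `n - 1` of them. -/
theorem prop_1_4_gradient_p (n : ℕ) (hn : 3 ≤ n)
    (p : MvPolynomial (Fin n) ℂ)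
    (hp : p = (∑ i, X i) - ∏ i, X i) :
    ({a : Fin n → ℂ | ∀ i, eval a (pderiv i p) = 0}
      = {a : Fin n → ℂ | ∃ ζ : ℂ, ζ ^ (n - 1) = 1 ∧ a = fun _ => ζ}) ∧
    {a : Fin n → ℂ | ∀ i, eval a (pderiv i p) = 0}.ncard = n - 1 := by
  have hcard : ∀ i : Fin n, (Finset.univ.erase i).card = n - 1 := by
    intro i
    rw [Finset.card_erase_of_mem (Finset.mem_univ i), Finset.card_univ, Fintype.card_fin]
  have hderiv : ∀ (a : Fin n → ℂ) (i : Fin n),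
      eval a (pderiv i p) = 1 - ∏ j ∈ Finset.univ.erase i, a j := by
    intro a i
    have h1 : pderiv i (∑ j, X j : MvPolynomial (Fin n) ℂ) = 1 := by
      rw [map_sum]
      rw [Finset.sum_eq_single i (fun j _ hj => pderiv_X_of_ne hj) (by simp)]
      exact pderiv_X_self i
    have h2 : pderiv i (∏ j, X j : MvPolynomial (Fin n) ℂ)
        = ∏ j ∈ Finset.univ.erase i, X j := by
      rw [← Finset.mul_prod_erase _ _ (Finset.mem_univ i), pderiv_mul, pderiv_X_self,
        one_mul, pderiv_prod_X_of_not_mem i _ (Finset.notMem_erase i _), mul_zero, add_zero]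
    rw [hp, map_sub, h1, h2, map_sub, map_prod]
    simp
  have hset : {a : Fin n → ℂ | ∀ i, eval a (pderiv i p) = 0}
      = {a : Fin n → ℂ | ∃ ζ : ℂ, ζ ^ (n - 1) = 1 ∧ a = fun _ => ζ} := by
    ext a
    simp only [Set.mem_setOf_eq]
    constructor
    · intro h
      have hprod : ∀ i : Fin n, ∏ j ∈ Finset.univ.erase i, a j = 1 := by
        intro i
        have := h i
        rw [hderiv] at this
        linear_combination -this
      have hconst : ∀ i : Fin n, a i = ∏ j, a j := by
        intro i
        rw [← Finset.mul_prod_erase _ _ (Finset.mem_univ i), hprod i, mul_one]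
      refine ⟨∏ j, a j, ?_, ?_⟩
      · have := hprod ⟨0, by omega⟩
        calc (∏ j, a j) ^ (n - 1)
            = ∏ j ∈ Finset.univ.erase (⟨0, by omega⟩ : Fin n), ∏ k, a k := by
              rw [Finset.prod_const, hcard]
          _ = ∏ j ∈ Finset.univ.erase (⟨0, by omega⟩ : Fin n), a j := by
              refine Finset.prod_congr rfl fun j _ => (hconst j).symm
          _ = 1 := this
      · funext i; exact hconst i
    · rintro ⟨ζ, hζ, rfl⟩
      intro i
      rw [hderiv, Finset.prod_const, hcard, hζ, sub_self]
  refine ⟨hset, ?_⟩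
  rw [hset]
  have himg : {a : Fin n → ℂ | ∃ ζ : ℂ, ζ ^ (n - 1) = 1 ∧ a = fun _ => ζ}
      = (fun ζ : ℂ => (fun _ : Fin n => ζ)) '' {ζ : ℂ | ζ ^ (n - 1) = 1} := by
    ext a
    simp only [Set.mem_image, Set.mem_setOf_eq]
    constructor
    · rintro ⟨ζ, h1, h2⟩; exact ⟨ζ, h1, h2.symm⟩
    · rintro ⟨ζ, h1, h2⟩; exact ⟨ζ, h1, h2.symm⟩
  rw [himg]
  have hinj : Set.InjOn (fun ζ : ℂ => (fun _ : Fin n => ζ)) {ζ : ℂ | ζ ^ (n - 1) = 1} := by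
    intro x _ y _ h
    exact congrFun h ⟨0, by omega⟩
  rw [Set.ncard_image_of_injOn hinj]
  have hne : n - 1 ≠ 0 := by omega
  have hroots : {ζ : ℂ | ζ ^ (n - 1) = 1}
      = ↑(Polynomial.nthRootsFinset (n - 1) (1 : ℂ)) := by
    ext ζ
    simp [Polynomial.mem_nthRootsFinset (Nat.pos_of_ne_zero hne)]
  rw [hroots, Set.ncard_coe_finset]
  exact (Complex.isPrimitiveRoot_exp (n - 1) hne).card_nthRootsFinset
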